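/- Assume q is a power of 2 and r ≥ 3. Let C be the F_{q^m}-span of the canonical family A, let B be any ordered basis of C, and let C_mat(B) be its matrix code of relations (a space of symmetric rm×rm matrices with zero diagonal over K = F_{q^m}, since the characteristic is 2). Let P_2^+ ⊆ K[m] be the associated Pfaffian-plus-linear ideal in the variables m = (m_{i,j})_{1≤i<j≤rm}. Then for every positive integer d, the degree-d homogeneous component P_2^+ ∩ Homog_d is a proper K-subspace of Homog_d; equivalently, the Hilbert function of K[m]/P_2^+ is positive at every degree d. -/

import Mathlib

open Matrix

/-- Componentwise (Schur) product of two vectors. -/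
def schur {F : Type*} [Field F] {n : ℕ} (a b : Fin n → F) : Fin n → F :=
  fun t => a t * b t

/-- The matrix code of quadratic relations associated with the ordered family `v`. -/
def Cmat {F : Type*} [Field F] {n : ℕ} {ι : Type*} [Fintype ι] [LinearOrder ι]
    (v : ι → Fin n → F) : Set (Matrix ι ι F) :=
  { M | ∃ c : ι → ι → F,
      (∑ i : ι, ∑ j : ι, (if i ≤ j then c i j • schur (v i) (v j) else 0)) = 0 ∧
      (∀ i j : ι, i < j → M i j = c i j ∧ M j i = c i j) ∧
      (∀ i : ι, M i i = 2 * c i i) }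

/-- Linear order on the index pairs `(j,i)` of the canonical family. -/
noncomputable instance pairLO (m r : ℕ) : LinearOrder (Fin m × Fin r) :=
  LinearOrder.lift' (fun p => finProdFinEquiv p) finProdFinEquiv.injective

/-- The rank-2 Pfaffian ideal (characteristic `2`), in the variables
`m_{i,j}` for `i < j`, generated by the quadrics
`m_{i,j}m_{k,l} + m_{i,k}m_{j,l} + m_{i,l}m_{j,k}` for `i < j < k < l`. -/
noncomputable def pfaffianIdeal (K : Type*) [Field K] (ι : Type*) [LinearOrder ι] :
    Ideal (MvPolynomial {p : ι × ι // p.1 < p.2} K) :=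
  Ideal.span { f | ∃ (i j k l : ι) (hij : i < j) (hjk : j < k) (hkl : k < l),
    f = MvPolynomial.X ⟨(i, j), hij⟩ * MvPolynomial.X ⟨(k, l), hkl⟩
      + MvPolynomial.X ⟨(i, k), hij.trans hjk⟩ * MvPolynomial.X ⟨(j, l), hjk.trans hkl⟩
      + MvPolynomial.X ⟨(i, l), (hij.trans hjk).trans hkl⟩ * MvPolynomial.X ⟨(j, k), hjk⟩ }

/-- The ideal generated by all homogeneous linear forms vanishing on the upper
triangular parts of all matrices of `Cm`. -/
noncomputable def linearFormsIdeal {K : Type*} [Field K] {ι : Type*} [LinearOrder ι]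
    (Cm : Set (Matrix ι ι K)) : Ideal (MvPolynomial {p : ι × ι // p.1 < p.2} K) :=
  Ideal.span { ℓ | ℓ.IsHomogeneous 1 ∧
    ∀ M ∈ Cm, MvPolynomial.eval (fun p : {p : ι × ι // p.1 < p.2} => M p.1.1 p.1.2) ℓ = 0 }

lemma sum_split3 {F : Type*} [CommRing F] {N : ℕ} (g : Fin N → Fin N → F) :
    ∑ k : Fin N, ∑ l : Fin N, g k l
      = (∑ k : Fin N, ∑ l : Fin N, if k < l then g k l + g l k else 0)
        + ∑ k : Fin N, g k k := by
  have h1 : ∀ k l : Fin N, g k l =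
      (if k < l then g k l else 0) + (if l < k then g k l else 0)
        + (if k = l then g k l else 0) := by
    intro k l
    rcases lt_trichotomy k l with h | h | h
    · simp [h, asymm h, h.ne]
    · subst h; simp
    · simp [h, asymm h, h.ne']
  calc ∑ k : Fin N, ∑ l : Fin N, g k l
      = ∑ k : Fin N, ∑ l : Fin N,
          ((if k < l then g k l else 0) + (if l < k then g k l else 0)
            + (if k = l then g k l else 0)) := by
        exact Finset.sum_congr rfl fun k _ => Finset.sum_congr rfl fun l _ => h1 k l
    _ = (∑ k : Fin N, ∑ l : Fin N, (if k < l then g k l else 0))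
        + (∑ k : Fin N, ∑ l : Fin N, (if l < k then g k l else 0))
        + ∑ k : Fin N, ∑ l : Fin N, (if k = l then g k l else 0) := by
        simp [Finset.sum_add_distrib]
    _ = (∑ k : Fin N, ∑ l : Fin N, (if k < l then g k l else 0))
        + (∑ k : Fin N, ∑ l : Fin N, (if k < l then g l k else 0))
        + ∑ k : Fin N, g k k := by
        congr 1
        · congr 1
          rw [Finset.sum_comm]
        · simp
    _ = (∑ k : Fin N, ∑ l : Fin N, if k < l then g k l + g l k else 0)
        + ∑ k : Fin N, g k k := by
        congr 1
        rw [← Finset.sum_add_distrib]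
        refine Finset.sum_congr rfl fun k _ => ?_
        rw [← Finset.sum_add_distrib]
        refine Finset.sum_congr rfl fun l _ => ?_
        split_ifs <;> simp

theorem pfaffian_plus_linear_hilbert_positive
    (q m r nn : ℕ) (hq : ∃ e : ℕ, 0 < e ∧ q = 2 ^ e)
    (hm : 0 < m) (hr : 3 ≤ r) (hn : 0 < nn)
    (F : Type*) [Field F] [Fintype F] (hF : Fintype.card F = q ^ m)
    (x y : Fin nn → F) (hx : Function.Injective x) (hy : ∀ t, y t ≠ 0)
    (A : Fin m × Fin r → Fin nn → F)
    (hA : A = fun p t => (x t ^ (p.2 : ℕ) * y t) ^ q ^ (p.1 : ℕ))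
    (hAind : LinearIndependent F A)
    (b : Fin (r * m) → Fin nn → F)
    (hbind : LinearIndependent F b)
    (hbspan : Submodule.span F (Set.range b) = Submodule.span F (Set.range A))
    (P2plus : Ideal (MvPolynomial {p : Fin (r * m) × Fin (r * m) // p.1 < p.2} F))
    (hP2plus : P2plus = pfaffianIdeal F (Fin (r * m)) + linearFormsIdeal (Cmat b)) :
    ∀ d : ℕ, 0 < d →
      MvPolynomial.homogeneousSubmodule {p : Fin (r * m) × Fin (r * m) // p.1 < p.2} F d ⊓
          Submodule.restrictScalars F P2plus <
        MvPolynomial.homogeneousSubmodule {p : Fin (r * m) × Fin (r * m) // p.1 < p.2} F d := by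
  intro d hd
  obtain ⟨e, he, hqe⟩ := hq
  -- characteristic 2
  haveI hp : CharP F (ringChar F) := ringChar.charP F
  have h2 : (2 : F) = 0 := by
    obtain ⟨n, hpp, hcard⟩ := FiniteField.card F (ringChar F)
    have hcard2 : Fintype.card F = 2 ^ (e * m) := by rw [hF, hqe, ← pow_mul]
    have hdvd : ringChar F ∣ 2 := by
      refine hpp.dvd_of_dvd_pow (n := e * m) ?_
      rw [← hcard2, hcard]
      exact dvd_pow_self _ n.ne_zero
    have hchar : ringChar F = 2 := (Nat.prime_dvd_prime_iff_eq hpp Nat.prime_two).mp hdvd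
    have := CharP.cast_eq_zero F (ringChar F)
    rw [hchar] at this
    exact_mod_cast this
  -- index points
  have h0r : (0 : ℕ) < r := by omega
  have h1r : (1 : ℕ) < r := by omega
  have h2r : (2 : ℕ) < r := by omega
  set p0 : Fin m × Fin r := (⟨0, hm⟩, ⟨0, h0r⟩) with hp0
  set p1 : Fin m × Fin r := (⟨0, hm⟩, ⟨1, h1r⟩) with hp1
  set p2 : Fin m × Fin r := (⟨0, hm⟩, ⟨2, h2r⟩) with hp2
  have hrel : ∀ t, A p0 t * A p2 t = A p1 t * A p1 t := by
    intro t
    subst hA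
    simp only [hp0, hp1, hp2]
    simp
    ring
  -- coefficients of A p in the basis b
  have hmemspan : ∀ p, A p ∈ Submodule.span F (Set.range b) := by
    intro p
    rw [hbspan]
    exact Submodule.subset_span ⟨p, rfl⟩
  obtain ⟨u, hu⟩ := (Submodule.mem_span_range_iff_exists_fun F).mp (hmemspan p0)
  obtain ⟨w, hw⟩ := (Submodule.mem_span_range_iff_exists_fun F).mp (hmemspan p1)
  obtain ⟨v, hv⟩ := (Submodule.mem_span_range_iff_exists_fun F).mp (hmemspan p2)
  have hu' : ∀ t, ∑ k, u k * b k t = A p0 t := by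
    intro t
    have := congrFun hu t
    simpa [Finset.sum_apply] using this
  have hw' : ∀ t, ∑ k, w k * b k t = A p1 t := by
    intro t
    have := congrFun hw t
    simpa [Finset.sum_apply] using this
  have hv' : ∀ t, ∑ k, v k * b k t = A p2 t := by
    intro t
    have := congrFun hv t
    simpa [Finset.sum_apply] using this
  -- the rank-2 relation matrix
  set M : Matrix (Fin (r * m)) (Fin (r * m)) F :=
    Matrix.of (fun k l => u k * v l + v k * u l) with hM
  set c : Fin (r * m) → Fin (r * m) → F := fun k l =>
    if k = l then u k * v k + w k * w k
    else (u k * v l + w k * w l) + (u l * v k + w l * w k) with hc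
  have hMmem : M ∈ Cmat b := by
    refine ⟨c, ?_, ?_, ?_⟩
    · funext t
      simp only [Finset.sum_apply, apply_ite (fun f : Fin nn → F => f t),
        Pi.smul_apply, smul_eq_mul, Pi.zero_apply, schur]
      set g : Fin (r * m) → Fin (r * m) → F :=
        fun k l => (u k * v l + w k * w l) * (b k t * b l t) with hg
      have hterm : ∀ k l, (if k ≤ l then c k l * (b k t * b l t) else 0)
          = (if k < l then g k l + g l k else 0) + (if k = l then g k l else 0) := by
        intro k l
        rcases lt_trichotomy k l with h | h | h
        · rw [if_pos h.le, if_pos h, if_neg h.ne, add_zero, hc, hg]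
          simp only [if_neg h.ne]
          ring
        · subst h
          rw [if_pos le_rfl, if_neg (lt_irrefl k), if_pos rfl, zero_add]
          have hck : c k k = u k * v k + w k * w k := by simp [hc]
          rw [hck, hg]
        · rw [if_neg (not_le.mpr h), if_neg (asymm h), if_neg h.ne', add_zero]
      calc ∑ k, ∑ l, (if k ≤ l then c k l * (b k t * b l t) else 0)
          = ∑ k, ∑ l, ((if k < l then g k l + g l k else 0)
              + (if k = l then g k l else 0)) :=
            Finset.sum_congr rfl fun k _ => Finset.sum_congr rfl fun l _ => hterm k l
        _ = (∑ k, ∑ l, if k < l then g k l + g l k else 0) + ∑ k, g k k := by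
            simp [Finset.sum_add_distrib]
        _ = ∑ k, ∑ l, g k l := (sum_split3 g).symm
        _ = (∑ k, u k * b k t) * (∑ l, v l * b l t)
            + (∑ k, w k * b k t) * (∑ l, w l * b l t) := by
            rw [Finset.sum_mul_sum, Finset.sum_mul_sum, ← Finset.sum_add_distrib]
            refine Finset.sum_congr rfl fun k _ => ?_
            rw [← Finset.sum_add_distrib]
            refine Finset.sum_congr rfl fun l _ => ?_
            rw [hg]
            ring
        _ = 0 := by
            rw [hu', hv', hw', hrel t]
            linear_combination (A p1 t * A p1 t) * h2
    · intro k l hkl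
      constructor
      · show u k * v l + v k * u l = c k l
        rw [hc]
        simp only [if_neg hkl.ne]
        linear_combination (-(w k * w l)) * h2
      · show u l * v k + v l * u k = c k l
        rw [hc]
        simp only [if_neg hkl.ne]
        linear_combination (-(w k * w l)) * h2
    · intro k
      show u k * v k + v k * u k = 2 * c k k
      have hck : c k k = u k * v k + w k * w k := by simp [hc]
      rw [hck]
      linear_combination (-(w k * w k)) * h2
  -- a nonzero entry of M above the diagonal
  have hMne : ∃ k l : Fin (r * m), k < l ∧ M k l ≠ 0 := by
    by_contra hcon
    push_neg at hcon
    have hZ : ∀ k l : Fin (r * m), u k * v l = u l * v k := by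
      intro k l
      rcases lt_trichotomy k l with h | h | h
      · have h0 : u k * v l + v k * u l = 0 := hcon k l h
        linear_combination h0 - (u l * v k) * h2
      · subst h; rfl
      · have h0 : u l * v k + v l * u k = 0 := hcon l k h
        linear_combination h0 - (u l * v k) * h2
    have hu0 : u ≠ 0 := by
      intro h
      apply hAind.ne_zero p0
      rw [← hu, h]
      simp
    obtain ⟨k0, hk0⟩ := Function.ne_iff.mp hu0
    have hk0' : u k0 ≠ 0 := by simpa using hk0
    set s : F := v k0 * (u k0)⁻¹ with hs
    have hveq : ∀ l, v l = s * u l := by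
      intro l
      rw [hs]
      field_simp
      linear_combination hZ k0 l
    have hAp2 : A p2 = s • A p0 := by
      rw [← hv, ← hu, Finset.smul_sum]
      refine Finset.sum_congr rfl fun l _ => ?_
      rw [smul_smul, hveq l]
    have hne02 : p0 ≠ p2 := by
      intro hco
      have := congrArg (fun p : Fin m × Fin r => (p.2 : ℕ)) hco
      simp [hp0, hp2] at this
    have hinj : Function.Injective ![p0, p2] := by
      intro a b' hab
      fin_cases a <;> fin_cases b'
      · rfl
      · exact absurd hab hne02
      · exact absurd hab.symm hne02
      · rfl
    have hpair : LinearIndependent F ![A p0, A p2] := by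
      have hcomp := hAind.comp ![p0, p2] hinj
      have hco : A ∘ ![p0, p2] = ![A p0, A p2] := by
        funext i; fin_cases i <;> rfl
      rwa [hco] at hcomp
    have := (LinearIndependent.pair_iff.mp hpair s (-1)
      (by rw [hAp2]; simp)).2
    exact one_ne_zero (neg_eq_zero.mp this)
  obtain ⟨k0, l0, hkl, hMkl⟩ := hMne
  -- evaluation point
  set vv : {p : Fin (r * m) × Fin (r * m) // p.1 < p.2} → F :=
    fun p => M p.1.1 p.1.2 with hvv
  have hker : ∀ f ∈ P2plus, MvPolynomial.eval vv f = 0 := by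
    intro f hf
    rw [hP2plus] at hf
    have hle : pfaffianIdeal F (Fin (r * m)) + linearFormsIdeal (Cmat b)
        ≤ RingHom.ker (MvPolynomial.eval vv) := by
      rw [Submodule.add_eq_sup]
      refine sup_le ?_ ?_
      · rw [pfaffianIdeal, Ideal.span_le]
        rintro f ⟨i, j, k, l, hij, hjk, hkl', rfl⟩
        simp only [SetLike.mem_coe, RingHom.mem_ker, map_add, _root_.map_mul,
          MvPolynomial.eval_X]
        show M i j * M k l + M i k * M j l + M i l * M j k = 0
        simp only [hM, Matrix.of_apply]
        linear_combination (u i * u k * v j * v l + u i * u l * v j * v k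
          + u j * u k * v i * v l + u j * u l * v i * v k
          + u i * u j * v k * v l + u k * u l * v i * v j) * h2
      · rw [linearFormsIdeal, Ideal.span_le]
        rintro ℓ ⟨-, hvan⟩
        simpa [RingHom.mem_ker, hvv] using hvan M hMmem
    exact hle hf
  -- conclusion
  rw [SetLike.lt_iff_le_and_exists]
  refine ⟨inf_le_left, MvPolynomial.X ⟨(k0, l0), hkl⟩ ^ d, ?_, ?_⟩
  · exact (MvPolynomial.mem_homogeneousSubmodule _ _).mpr
      (MvPolynomial.isHomogeneous_X_pow _ d)
  · intro hmem'
    rw [Submodule.mem_inf] at hmem'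
    have hfP : MvPolynomial.X
        (⟨(k0, l0), hkl⟩ : {p : Fin (r * m) × Fin (r * m) // p.1 < p.2}) ^ d ∈ P2plus :=
      hmem'.2
    have h0 := hker _ hfP
    rw [map_pow, MvPolynomial.eval_X] at h0
    exact hMkl (pow_eq_zero_iff hd.ne' |>.mp h0)
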